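/- Let D be a Hermitian n×n complex matrix in block form D = [[A, V],[V*, B]], where A is k×k, B is m×m (k + m = n), and ‖V‖ ≤ 1/2. Let ε > 0 and suppose that B has no eigenvalues in the open interval (−2ε, 2ε). Then B is invertible and C_ε(A − V·B⁻¹·V*) ≤ C_ε(D). -/

import Mathlib

open Matrix
open scoped InnerProductSpace

/-- Number of eigenvalues (with multiplicity) of a Hermitian matrix in the open
interval `(a, b)`. -/
noncomputable def eigCountIoo {n : Type*} [Fintype n] [DecidableEq n]
    (M : Matrix n n ℂ) (a b : ℝ) : ℕ :=
  if hM : M.IsHermitian then Nat.card {i : n // hM.eigenvalues i ∈ Set.Ioo a b} else 0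

/-- The operator (spectral) norm of a matrix, i.e. the norm of the induced operator
between Euclidean spaces. -/
noncomputable def matNorm {m n : Type*} [Fintype m] [Fintype n] [DecidableEq n]
    (M : Matrix m n ℂ) : ℝ :=
  ‖LinearMap.toContinuousLinearMap (Matrix.toEuclideanLin M)‖

lemma parseval_sq {ι : Type*} [Fintype ι] [DecidableEq ι]
    (b : OrthonormalBasis ι ℂ (EuclideanSpace ℂ ι)) (v : EuclideanSpace ℂ ι) :
    ∑ i, ‖(⟪b i, v⟫_ℂ)‖ ^ 2 = ∑ i, ‖v i‖ ^ 2 := by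
  have h1 : ∀ i, (⟪b i, v⟫_ℂ) = b.repr v i := fun i => (b.repr_apply_apply v i).symm
  simp_rw [h1]
  have h2 : ‖b.repr v‖ = ‖v‖ := b.repr.norm_map v
  rw [EuclideanSpace.norm_eq, EuclideanSpace.norm_eq] at h2
  have := congrArg (· ^ 2) h2
  simp only [Real.sq_sqrt (Finset.sum_nonneg (fun i _ => sq_nonneg ‖_‖))] at this
  exact this

lemma inner_mulVec_eig {ι : Type*} [Fintype ι] [DecidableEq ι] {M : Matrix ι ι ℂ}
    (hM : M.IsHermitian) (v : EuclideanSpace ℂ ι) (i : ι) :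
    (⟪hM.eigenvectorBasis i, (WithLp.toLp 2 (M *ᵥ v : ι → ℂ) : EuclideanSpace ℂ ι)⟫_ℂ) =
      (hM.eigenvalues i : ℂ) * ⟪hM.eigenvectorBasis i, v⟫_ℂ := by
  set u : ι → ℂ := ⇑(hM.eigenvectorBasis i) with hu
  have h0 : (⟪hM.eigenvectorBasis i, (WithLp.toLp 2 (M *ᵥ v : ι → ℂ) : EuclideanSpace ℂ ι)⟫_ℂ)
      = star u ⬝ᵥ (M *ᵥ v) := by
    rw [EuclideanSpace.inner_eq_star_dotProduct, dotProduct_comm]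
  have h3 : star u ᵥ* M = ((hM.eigenvalues i : ℂ)) • star u := by
    conv_lhs => rw [← hM]
    rw [← star_mulVec, hM.mulVec_eigenvectorBasis i]
    funext a
    simp [u, Complex.real_smul, mul_comm]
  rw [h0, dotProduct_mulVec, h3, smul_dotProduct]
  rw [EuclideanSpace.inner_eq_star_dotProduct, dotProduct_comm v.ofLp, smul_eq_mul]


set_option maxHeartbeats 2000000 in
theorem stmt11 {k m : ℕ} (A : Matrix (Fin k) (Fin k) ℂ) (B : Matrix (Fin m) (Fin m) ℂ)
    (V : Matrix (Fin k) (Fin m) ℂ) (hA : A.IsHermitian) (hB : B.IsHermitian)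
    (hV : matNorm V ≤ 1 / 2) (ε : ℝ) (hε : 0 < ε)
    (hgap : eigCountIoo B (-(2 * ε)) (2 * ε) = 0) :
    IsUnit B ∧
      eigCountIoo (A - V * B⁻¹ * Vᴴ) (-ε) ε ≤
        eigCountIoo (Matrix.fromBlocks A V Vᴴ B) (-ε) ε := by
  classical
  -- B has no eigenvalues in (-2ε, 2ε)
  have hBev : ∀ i, hB.eigenvalues i ∉ Set.Ioo (-(2 * ε)) (2 * ε) := by
    intro i hi
    rw [eigCountIoo, dif_pos hB] at hgap
    have : Nat.card {j : Fin m // hB.eigenvalues j ∈ Set.Ioo (-(2 * ε)) (2 * ε)} ≠ 0 := by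
      have : Nonempty {j : Fin m // hB.eigenvalues j ∈ Set.Ioo (-(2 * ε)) (2 * ε)} := ⟨⟨i, hi⟩⟩
      rw [Nat.card_eq_fintype_card]
      exact Fintype.card_ne_zero
    exact this hgap
  have hBdet : IsUnit B.det := by
    rw [hB.det_eq_prod_eigenvalues]
    rw [isUnit_iff_ne_zero]
    apply Finset.prod_ne_zero_iff.2
    intro i _
    have := hBev i
    simp only [Set.mem_Ioo, not_and_or, not_lt] at this
    have hne : hB.eigenvalues i ≠ 0 := by
      rcases this with h | h
      · nlinarith
      · nlinarith
    exact Complex.ofReal_ne_zero.2 hne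
  have hBunit : IsUnit B := B.isUnit_iff_isUnit_det.2 hBdet
  refine ⟨hBunit, ?_⟩
  -- Hermitian structures
  set S : Matrix (Fin k) (Fin k) ℂ := A - V * B⁻¹ * Vᴴ with hSdef
  have hS : S.IsHermitian := by
    apply hA.sub
    have hBinv : (B⁻¹).IsHermitian := hB.inv
    have : (V * B⁻¹ * Vᴴ)ᴴ = V * B⁻¹ * Vᴴ := by
      rw [conjTranspose_mul, conjTranspose_mul, conjTranspose_conjTranspose, hBinv.eq,
        Matrix.mul_assoc]
    exact this
  have hD : (Matrix.fromBlocks A V Vᴴ B).IsHermitian := hA.fromBlocks rfl hB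
  rw [eigCountIoo, dif_pos hS, eigCountIoo, dif_pos hD, Nat.card_eq_fintype_card,
    Nat.card_eq_fintype_card]
  by_contra hcon
  push_neg at hcon
  -- abbreviations
  set D : Matrix (Fin k ⊕ Fin m) (Fin k ⊕ Fin m) ℂ := Matrix.fromBlocks A V Vᴴ B with hDdef
  set T : Matrix (Fin m) (Fin k) ℂ := -(B⁻¹ * Vᴴ) with hTdef
  -- the embedding x ↦ (x, T x)
  set W : EuclideanSpace ℂ (Fin k) →ₗ[ℂ] EuclideanSpace ℂ (Fin k ⊕ Fin m) :=
    { toFun := fun x => WithLp.toLp 2 (Sum.elim (x : Fin k → ℂ) (T *ᵥ x) : Fin k ⊕ Fin m → ℂ)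
      map_add' := fun x y => by
        ext p
        rcases p with a | b
        · rfl
        · exact congrFun (Matrix.mulVec_add T x y) b
      map_smul' := fun r x => by
        ext p
        rcases p with a | b
        · rfl
        · exact congrFun (Matrix.mulVec_smul T r x) b } with hWdef
  set L1 : ({i : Fin k // hS.eigenvalues i ∈ Set.Ioo (-ε) ε} → ℂ) →ₗ[ℂ]
      EuclideanSpace ℂ (Fin k) :=
    { toFun := fun c => ∑ i, c i • (hS.eigenvectorBasis i.1 : EuclideanSpace ℂ (Fin k))
      map_add' := fun c c' => by simp [add_smul, Finset.sum_add_distrib]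
      map_smul' := fun r c => by simp [smul_smul, Finset.smul_sum] } with hL1def
  set F : ({i : Fin k // hS.eigenvalues i ∈ Set.Ioo (-ε) ε} → ℂ) →ₗ[ℂ]
      ({j : Fin k ⊕ Fin m // hD.eigenvalues j ∈ Set.Ioo (-ε) ε} → ℂ) :=
    LinearMap.pi (fun j => (innerₛₗ ℂ (hD.eigenvectorBasis j.1)).comp (W.comp L1)) with hFdef
  -- F is not injective
  have hninj : ¬ Function.Injective F := by
    intro hinj
    have h1 := LinearMap.finrank_le_finrank_of_injective hinj
    rw [Module.finrank_fintype_fun_eq_card, Module.finrank_fintype_fun_eq_card] at h1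
    omega
  have hker : LinearMap.ker F ≠ ⊥ := fun h => hninj (LinearMap.ker_eq_bot.mp h)
  obtain ⟨c, hcker, hc0⟩ := Submodule.exists_mem_ne_zero_of_ne_bot hker
  obtain ⟨i0, hi0⟩ : ∃ i, c i ≠ 0 := by
    by_contra hall; push_neg at hall; exact hc0 (funext hall)
  set x : EuclideanSpace ℂ (Fin k) := L1 c with hxdef
  set w : EuclideanSpace ℂ (Fin k ⊕ Fin m) := W x with hwdef
  -- coefficients of x
  have hd : ∀ a : Fin k, (⟪hS.eigenvectorBasis a, x⟫_ℂ) =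
      if h : hS.eigenvalues a ∈ Set.Ioo (-ε) ε then c ⟨a, h⟩ else 0 := by
    intro a
    have hx : x = ∑ i, c i • (hS.eigenvectorBasis i.1 : EuclideanSpace ℂ (Fin k)) := rfl
    rw [hx, inner_sum]
    simp_rw [inner_smul_right]
    have horth := hS.eigenvectorBasis.orthonormal
    rw [orthonormal_iff_ite] at horth
    by_cases h : hS.eigenvalues a ∈ Set.Ioo (-ε) ε
    · rw [dif_pos h]
      rw [Fintype.sum_eq_single (⟨a, h⟩ : {i : Fin k // hS.eigenvalues i ∈ Set.Ioo (-ε) ε})]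
      · rw [horth]; simp
      · intro b hb
        rw [horth]
        have : a ≠ b.1 := fun he => hb (Subtype.ext he.symm)
        simp [this]
    · rw [dif_neg h]
      apply Finset.sum_eq_zero
      intro b _
      rw [horth]
      have : a ≠ b.1 := fun he => h (he ▸ b.2)
      simp [this]
  -- the coefficients of w in the bad directions vanish
  have he : ∀ j : {j : Fin k ⊕ Fin m // hD.eigenvalues j ∈ Set.Ioo (-ε) ε},
      (⟪hD.eigenvectorBasis j.1, w⟫_ℂ) = 0 := by
    intro j
    have hFc : F c = 0 := LinearMap.mem_ker.mp hcker
    have := congrFun hFc j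
    simpa [hFdef, LinearMap.pi_apply, hwdef, hxdef] using this
  -- block computation
  have hDw : (D *ᵥ (w : Fin k ⊕ Fin m → ℂ) : Fin k ⊕ Fin m → ℂ)
      = Sum.elim (S *ᵥ (x : Fin k → ℂ)) 0 := by
    have hw' : (w : Fin k ⊕ Fin m → ℂ) = Sum.elim (x : Fin k → ℂ) (T *ᵥ x) := rfl
    have h1 : ∀ v : Fin k → ℂ, A *ᵥ v + V *ᵥ (T *ᵥ v) = S *ᵥ v := by
      intro v
      rw [mulVec_mulVec, hSdef, sub_mulVec, hTdef, Matrix.mul_neg, neg_mulVec,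
        ← Matrix.mul_assoc, ← sub_eq_add_neg]
    have h2 : ∀ v : Fin k → ℂ, Vᴴ *ᵥ v + B *ᵥ (T *ᵥ v) = 0 := by
      intro v
      rw [mulVec_mulVec, hTdef, Matrix.mul_neg, ← Matrix.mul_assoc,
        Matrix.mul_nonsing_inv _ hBdet, Matrix.one_mul, neg_mulVec, add_neg_cancel]
    rw [hw', hDdef, fromBlocks_mulVec]
    simp only [Sum.elim_comp_inl, Sum.elim_comp_inr]
    rw [h1 x, h2 x]
  -- the contradiction chain
  have key : (∑ a, ‖(WithLp.toLp 2 (S *ᵥ (x : Fin k → ℂ)) : EuclideanSpace ℂ (Fin k)) a‖ ^ 2) <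
      ∑ a, ‖(WithLp.toLp 2 (S *ᵥ (x : Fin k → ℂ)) : EuclideanSpace ℂ (Fin k)) a‖ ^ 2 := by
    calc (∑ a, ‖(WithLp.toLp 2 (S *ᵥ (x : Fin k → ℂ)) : EuclideanSpace ℂ (Fin k)) a‖ ^ 2)
        = ∑ a, ‖(⟪hS.eigenvectorBasis a, (WithLp.toLp 2 (S *ᵥ (x : Fin k → ℂ)) : EuclideanSpace ℂ (Fin k))⟫_ℂ)‖ ^ 2 :=
          (parseval_sq hS.eigenvectorBasis _).symm
      _ = ∑ a, (hS.eigenvalues a) ^ 2 * ‖(⟪hS.eigenvectorBasis a, x⟫_ℂ)‖ ^ 2 := by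
          refine Finset.sum_congr rfl fun a _ => ?_
          rw [inner_mulVec_eig hS x a, norm_mul, mul_pow, Complex.norm_real,
            Real.norm_eq_abs, sq_abs]
      _ < ∑ a, ε ^ 2 * ‖(⟪hS.eigenvectorBasis a, x⟫_ℂ)‖ ^ 2 := by
          apply Finset.sum_lt_sum
          · intro a _
            by_cases h : hS.eigenvalues a ∈ Set.Ioo (-ε) ε
            · exact mul_le_mul_of_nonneg_right (sq_lt_sq' h.1 h.2).le (sq_nonneg _)
            · rw [hd a, dif_neg h]; simp
          · refine ⟨i0.1, Finset.mem_univ _, ?_⟩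
            have hda : (⟪hS.eigenvectorBasis i0.1, x⟫_ℂ) = c i0 := by
              rw [hd i0.1, dif_pos i0.2]
            have hpos : (0:ℝ) < ‖(⟪hS.eigenvectorBasis i0.1, x⟫_ℂ)‖ ^ 2 := by
              rw [hda]; exact pow_pos (norm_pos_iff.2 hi0) 2
            exact mul_lt_mul_of_pos_right (sq_lt_sq' i0.2.1 i0.2.2) hpos
      _ = ε ^ 2 * ∑ a, ‖(⟪hS.eigenvectorBasis a, x⟫_ℂ)‖ ^ 2 := (Finset.mul_sum _ _ _).symm
      _ = ε ^ 2 * ∑ a, ‖x a‖ ^ 2 := by rw [parseval_sq]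
      _ ≤ ε ^ 2 * ∑ p, ‖w p‖ ^ 2 := by
          apply mul_le_mul_of_nonneg_left _ (sq_nonneg ε)
          have : (∑ p, ‖w p‖ ^ 2) = ∑ a, ‖w (Sum.inl a)‖ ^ 2 + ∑ b, ‖w (Sum.inr b)‖ ^ 2 :=
            Fintype.sum_sum_type _
          rw [this]
          have hwl : ∀ a, w (Sum.inl a) = x a := fun a => rfl
          simp_rw [hwl]
          exact le_add_of_nonneg_right (Finset.sum_nonneg fun b _ => sq_nonneg _)
      _ = ε ^ 2 * ∑ j, ‖(⟪hD.eigenvectorBasis j, w⟫_ℂ)‖ ^ 2 := by rw [parseval_sq]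
      _ ≤ ∑ j, (hD.eigenvalues j) ^ 2 * ‖(⟪hD.eigenvectorBasis j, w⟫_ℂ)‖ ^ 2 := by
          rw [Finset.mul_sum]
          apply Finset.sum_le_sum
          intro j _
          by_cases h : hD.eigenvalues j ∈ Set.Ioo (-ε) ε
          · rw [he ⟨j, h⟩]; simp
          · apply mul_le_mul_of_nonneg_right _ (sq_nonneg _)
            simp only [Set.mem_Ioo, not_and_or, not_lt] at h
            rcases h with h | h
            · nlinarith
            · nlinarith
      _ = ∑ j, ‖(⟪hD.eigenvectorBasis j, (WithLp.toLp 2 (D *ᵥ (w : Fin k ⊕ Fin m → ℂ)) : EuclideanSpace ℂ (Fin k ⊕ Fin m))⟫_ℂ)‖ ^ 2 := by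
          refine Finset.sum_congr rfl fun j _ => ?_
          rw [inner_mulVec_eig hD w j, norm_mul, mul_pow, Complex.norm_real,
            Real.norm_eq_abs, sq_abs]
      _ = ∑ p, ‖(WithLp.toLp 2 (D *ᵥ (w : Fin k ⊕ Fin m → ℂ)) : EuclideanSpace ℂ (Fin k ⊕ Fin m)) p‖ ^ 2 :=
          parseval_sq hD.eigenvectorBasis _
      _ = ∑ a, ‖(WithLp.toLp 2 (S *ᵥ (x : Fin k → ℂ)) : EuclideanSpace ℂ (Fin k)) a‖ ^ 2 := by
          rw [hDw, Fintype.sum_sum_type]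
          simp
  exact lt_irrefl _ key
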